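/- In an F-algebra A, for all a, b ∈ ◇(A): a ≤ b if and only if a → b = ½. Consequently ◇(A) with the restricted operations is a generalized Boolean algebra. -/

import Mathlib

/-- An F-algebra: a centered Kleene algebra (distributive lattice with involutive
De Morgan negation satisfying the Kleene inequality, with center `½`) with an
implication satisfying (F1)–(F6), where `◇x := x ⊓ ½`. -/
class FAlgebra (A : Type*) extends DistribLattice A where
  neg : A → A
  half : A
  imp : A → A → A
  neg_neg : ∀ a : A, neg (neg a) = a
  neg_inf : ∀ a b : A, neg (a ⊓ b) = neg a ⊔ neg b
  kleene : ∀ a b : A, neg a ⊓ a ≤ neg b ⊔ b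
  neg_half : neg half = half
  f1 : ∀ x y : A, x ⊓ y = x ⊓ imp x y
  f2 : ∀ x y : A, imp x y ≤ (x ⊓ y) ⊔ half
  f3 : ∀ x y z : A, imp (x ⊓ y) z = imp x (imp y z)
  f4 : ∀ x y : A, half ≤ imp x (imp y y)
  f5 : ∀ x y : A, half ≤ imp (imp (imp x y) x) x
  f6 : ∀ x y : A, imp x y ⊓ half = imp (x ⊓ half) (y ⊓ half)

open FAlgebra

section Aux
variable {A : Type*} [FAlgebra A]

/-- Fixed points of `· ⊓ half` characterize membership in the range. -/
lemma fAux_fix {a : A} (h : a ∈ Set.range (fun x : A => x ⊓ half)) :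
    a ⊓ half = a := by
  obtain ⟨x, rfl⟩ := h
  simp [inf_assoc]

lemma fAux_imp_fix {a b : A} (ha : a ⊓ half = a) (hb : b ⊓ half = b) :
    imp a b ⊓ half = imp a b := by
  rw [f6, ha, hb]

lemma fAux_le_iff {a b : A} (ha : a ⊓ half = a) (hb : b ⊓ half = b) :
    a ≤ b ↔ imp a b = half := by
  constructor
  · intro h
    have h1 : half ≤ imp a b := by
      have h4 := f4 a b
      rw [← f3, inf_eq_left.mpr h] at h4
      exact h4
    have h2 : imp a b ≤ half := by
      rw [← fAux_imp_fix ha hb]; exact inf_le_right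
    exact le_antisymm h2 h1
  · intro h
    have h1 := f1 a b
    rw [h, ha] at h1
    exact inf_eq_left.mp h1

lemma fAux_resid {a b z : A} (ha : a ⊓ half = a) (hb : b ⊓ half = b)
    (hz : z ⊓ half = z) : a ⊓ b ≤ z ↔ b ≤ imp a z := by
  have hab : (a ⊓ b) ⊓ half = a ⊓ b := by rw [inf_assoc, hb]
  constructor
  · intro h
    have h1 : imp (a ⊓ b) z = half := (fAux_le_iff hab hz).mp h
    rw [inf_comm, f3] at h1
    exact (fAux_le_iff hb (fAux_imp_fix ha hz)).mpr h1
  · intro h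
    calc a ⊓ b ≤ a ⊓ imp a z := inf_le_inf_left a h
    _ = a ⊓ z := (f1 a z).symm
    _ ≤ z := inf_le_right

lemma fAux_peirce {a b : A} (ha : a ⊓ half = a) (hb : b ⊓ half = b) :
    imp (imp a b) a = a := by
  have hc : imp a b ⊓ half = imp a b := fAux_imp_fix ha hb
  have hca : imp (imp a b) a ⊓ half = imp (imp a b) a := fAux_imp_fix hc ha
  have h5 := f5 a b
  have hfix : imp (imp (imp a b) a) a ⊓ half = imp (imp (imp a b) a) a :=
    fAux_imp_fix hca ha
  have h5' : imp (imp (imp a b) a) a = half :=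
    le_antisymm (by rw [← hfix]; exact inf_le_right) h5
  have hle : imp (imp a b) a ≤ a := (fAux_le_iff hca ha).mpr h5'
  have hge : a ≤ imp (imp a b) a :=
    (fAux_resid hc ha ha).mp inf_le_right
  exact le_antisymm hle hge

end Aux

/-- in an F-algebra, for `a, b ∈ ◇(A)`, `a ≤ b` iff `a → b = ½`;
consequently `◇(A)` with the restricted operations is a generalized Boolean
algebra (closed under the operations, with top `½`, residuation and Peirce's law). -/
theorem f_diamond_generalized_boolean {A : Type*} [FAlgebra A] :
    let S : Set A := Set.range (fun x : A => x ⊓ half)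
    (∀ a ∈ S, ∀ b ∈ S, (a ≤ b ↔ imp a b = half)) ∧
    (∀ a ∈ S, ∀ b ∈ S, a ⊓ b ∈ S ∧ a ⊔ b ∈ S ∧ imp a b ∈ S) ∧
    ((half : A) ∈ S) ∧
    (∀ a ∈ S, a ≤ half) ∧
    (∀ a ∈ S, ∀ b ∈ S, ∀ z ∈ S, (a ⊓ b ≤ z ↔ b ≤ imp a z)) ∧
    (∀ a ∈ S, ∀ b ∈ S, imp (imp a b) a = a) := by
  intro S
  refine ⟨?_, ?_, ?_, ?_, ?_, ?_⟩
  · intro a ha b hb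
    exact fAux_le_iff (fAux_fix ha) (fAux_fix hb)
  · intro a ha b hb
    have ha' := fAux_fix ha
    have hb' := fAux_fix hb
    refine ⟨⟨a ⊓ b, ?_⟩, ⟨a ⊔ b, ?_⟩, ⟨imp a b, fAux_imp_fix ha' hb'⟩⟩
    · simp only [inf_assoc, hb']
    · have : (a ⊔ b) ⊓ half = a ⊔ b :=
        inf_eq_left.mpr (sup_le ((le_of_eq ha'.symm).trans inf_le_right)
          ((le_of_eq hb'.symm).trans inf_le_right))
      exact this
  · exact ⟨half, inf_idem half⟩
  · intro a ha
    rw [← fAux_fix ha]; exact inf_le_right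
  · intro a ha b hb z hz
    exact fAux_resid (fAux_fix ha) (fAux_fix hb) (fAux_fix hz)
  · intro a ha b hb
    exact fAux_peirce (fAux_fix ha) (fAux_fix hb)
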